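/- Let α > 1, weights 1 ≥ γ_1 ≥ … ≥ γ_d > 0, N ≥ 1, and q > 1/α. Then |A_d(N)| ≤ N^q ∏_{j=1}^d (1 + 2ζ(αq) γ_j^q), where ζ is the Riemann zeta function and A_d(N) := {h ∈ ℤ^d : ∏_{j=1}^d max(1, γ_j^{-1}|h_j|^α) ≤ N}. -/
import Mathlib

noncomputable def realZeta (s : ℝ) : ℝ := ∑' n : ℕ, ((n : ℝ) + 1) ^ (-s)

lemma summable_aux {s : ℝ} (hs : 1 < s) :
    Summable (fun n : ℕ => ((n : ℝ) + 1) ^ (-s)) := by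
  have h : Summable (fun n : ℕ => (n : ℝ) ^ (-s)) :=
    Real.summable_nat_rpow.mpr (by linarith)
  have h2 := (summable_nat_add_iff (f := fun n : ℕ => (n : ℝ) ^ (-s)) 1).mpr h
  refine h2.congr fun n => ?_
  push_cast
  ring_nf

lemma realZeta_nonneg {s : ℝ} : 0 ≤ realZeta s :=
  tsum_nonneg fun n => Real.rpow_nonneg (by positivity) _

lemma sum_pos_le {s : ℝ} (hs : 1 < s) (S : Finset ℤ) (hS : ∀ x ∈ S, 0 < x) :
    ∑ x ∈ S, |(x : ℝ)| ^ (-s) ≤ realZeta s := by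
  have hinj : ∀ x ∈ S, ∀ y ∈ S, (x - 1).toNat = (y - 1).toNat → x = y := by
    intro a ha b hb hab
    have ha' := hS a ha; have hb' := hS b hb
    omega
  calc ∑ x ∈ S, |(x : ℝ)| ^ (-s)
      = ∑ x ∈ S, ((((x - 1).toNat : ℝ)) + 1) ^ (-s) := by
        refine Finset.sum_congr rfl fun x hx => ?_
        have hx' := hS x hx
        have h1 : ((x - 1).toNat : ℤ) = x - 1 := Int.toNat_of_nonneg (by omega)
        have h2 : |(x : ℝ)| = ((x - 1).toNat : ℝ) + 1 := by
          rw [abs_of_pos (by exact_mod_cast hx')]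
          have : (((x - 1).toNat : ℤ) : ℝ) = ((x : ℝ) - 1) := by exact_mod_cast congrArg (Int.cast : ℤ → ℝ) h1
          push_cast at this ⊢
          linarith
        rw [h2]
    _ = ∑ n ∈ (S.image (fun x => (x - 1).toNat) : Finset ℕ), ((n : ℝ) + 1) ^ (-s) := by
        rw [Finset.sum_image hinj]
    _ ≤ realZeta s :=
        Summable.sum_le_tsum _ (fun n _ => Real.rpow_nonneg (by positivity) _) (summable_aux hs)

lemma factor_bound {α q g : ℝ} (hα : 1 < α) (hg0 : 0 < g) (hg1 : g ≤ 1) (hq : 1 / α < q)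
    (T : Finset ℤ) :
    ∑ x ∈ T, (max 1 (g⁻¹ * |(x : ℝ)| ^ α)) ^ (-q) ≤ 1 + 2 * realZeta (α * q) * g ^ q := by
  have hα0 : (0:ℝ) < α := by linarith
  have hq0 : 0 < q := lt_trans (by positivity) hq
  have hs : 1 < α * q := by
    have := mul_lt_mul_of_pos_left hq hα0
    rwa [mul_one_div, div_self (ne_of_gt hα0)] at this
  set f : ℤ → ℝ := fun x => (max 1 (g⁻¹ * |(x : ℝ)| ^ α)) ^ (-q) with hf
  have hf0 : ∀ x, 0 ≤ f x := fun x =>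
    Real.rpow_nonneg (le_trans zero_le_one (le_max_left _ _)) _
  have hfne : ∀ x : ℤ, x ≠ 0 → f x = g ^ q * |(x : ℝ)| ^ (-(α * q)) := by
    intro x hx
    have hx1 : (1:ℝ) ≤ |(x : ℝ)| := by
      have h1 : (1:ℤ) ≤ |x| := Int.one_le_abs (by omega)
      have : ((|x| : ℤ) : ℝ) = |(x : ℝ)| := by push_cast; rfl
      rw [← this]; exact_mod_cast h1
    have hxa : 1 ≤ |(x : ℝ)| ^ α := Real.one_le_rpow hx1 (by linarith)
    have hgi : 1 ≤ g⁻¹ := by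
      rw [le_inv_comm₀ one_pos hg0]; simpa using hg1
    have hmax : max 1 (g⁻¹ * |(x : ℝ)| ^ α) = g⁻¹ * |(x : ℝ)| ^ α :=
      max_eq_right (by nlinarith)
    rw [hf]
    simp only [hmax]
    rw [Real.mul_rpow (by positivity) (by positivity), Real.inv_rpow hg0.le,
      ← Real.rpow_neg hg0.le, neg_neg, ← Real.rpow_mul (abs_nonneg _)]
    ring_nf
  have hsubset : T ⊆ insert 0 (T.erase 0) := by
    intro x hx
    by_cases h : x = 0
    · subst h; exact Finset.mem_insert_self _ _
    · exact Finset.mem_insert_of_mem (Finset.mem_erase.mpr ⟨h, hx⟩)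
  have hf00 : f 0 = 1 := by
    simp [hf, Real.zero_rpow (ne_of_gt hα0)]
  calc ∑ x ∈ T, f x ≤ ∑ x ∈ insert 0 (T.erase 0), f x :=
        Finset.sum_le_sum_of_subset_of_nonneg hsubset (fun x _ _ => hf0 x)
    _ = f 0 + ∑ x ∈ T.erase 0, f x := Finset.sum_insert (Finset.notMem_erase 0 T)
    _ ≤ 1 + 2 * realZeta (α * q) * g ^ q := by
        rw [hf00]
        have hrw : ∑ x ∈ T.erase 0, f x
            = g ^ q * ∑ x ∈ T.erase 0, |(x : ℝ)| ^ (-(α * q)) := by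
          rw [Finset.mul_sum]
          refine Finset.sum_congr rfl fun x hx => ?_
          exact hfne x (Finset.mem_erase.mp hx).1
        rw [hrw]
        set S := T.erase 0 with hSdef
        have hsplit : ∑ x ∈ S.filter (fun x => 0 < x), |(x : ℝ)| ^ (-(α * q))
            + ∑ x ∈ S.filter (fun x => ¬ 0 < x), |(x : ℝ)| ^ (-(α * q))
            = ∑ x ∈ S, |(x : ℝ)| ^ (-(α * q)) :=
          Finset.sum_filter_add_sum_filter_not S _ _
        have hpos : ∑ x ∈ S.filter (fun x => 0 < x), |(x : ℝ)| ^ (-(α * q))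
            ≤ realZeta (α * q) :=
          sum_pos_le hs _ (fun x hx => (Finset.mem_filter.mp hx).2)
        have hneg : ∑ x ∈ S.filter (fun x => ¬ 0 < x), |(x : ℝ)| ^ (-(α * q))
            ≤ realZeta (α * q) := by
          have hinj : ∀ x ∈ S.filter (fun x => ¬ 0 < x), ∀ y ∈ S.filter (fun x => ¬ 0 < x),
              -x = -y → x = y := fun a _ b _ h => by omega
          have himg : ∑ y ∈ (S.filter (fun x => ¬ 0 < x)).image (fun x => -x),
              |(y : ℝ)| ^ (-(α * q))
              = ∑ x ∈ S.filter (fun x => ¬ 0 < x), |(x : ℝ)| ^ (-(α * q)) := by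
            rw [Finset.sum_image hinj]
            refine Finset.sum_congr rfl fun x _ => ?_
            push_cast
            rw [abs_neg]
          rw [← himg]
          refine sum_pos_le hs _ fun y hy => ?_
          obtain ⟨x, hx, rfl⟩ := Finset.mem_image.mp hy
          have hx1 := (Finset.mem_filter.mp hx).2
          have hx2 : x ≠ 0 := (Finset.mem_erase.mp (Finset.mem_filter.mp hx).1).1
          omega
        have hz := realZeta_nonneg (s := α * q)
        have hgq : (0:ℝ) ≤ g ^ q := Real.rpow_nonneg hg0.le _
        nlinarith [hsplit]
  
theorem korobov_card_upper_bound (d : ℕ) (α : ℝ) (hα : 1 < α)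
    (γ : Fin d → ℝ) (hγpos : ∀ j, 0 < γ j) (hγ1 : ∀ j, γ j ≤ 1)
    (hγmono : ∀ i j : Fin d, i ≤ j → γ j ≤ γ i)
    (N : ℝ) (hN : 1 ≤ N) (q : ℝ) (hq : 1 / α < q)
    (hA : {h : Fin d → ℤ | (∏ j, max 1 ((γ j)⁻¹ * |(h j : ℝ)| ^ α)) ≤ N}.Finite) :
    (hA.toFinset.card : ℝ) ≤ N ^ q * ∏ j, (1 + 2 * realZeta (α * q) * γ j ^ q) := by
  have hα0 : (0:ℝ) < α := by linarith
  have hq0 : 0 < q := lt_trans (by positivity) hq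
  have hN0 : (0:ℝ) < N := by linarith
  set T : Fin d → Finset ℤ := fun j => hA.toFinset.image (fun h => h j) with hT
  set f : Fin d → ℤ → ℝ := fun j x => (max 1 ((γ j)⁻¹ * |(x : ℝ)| ^ α)) ^ (-q) with hfdef
  have hf0 : ∀ j x, 0 ≤ f j x := fun j x =>
    Real.rpow_nonneg (le_trans zero_le_one (le_max_left _ _)) _
  have key : ∀ h ∈ hA.toFinset, (1:ℝ) ≤ N ^ q * ∏ j, f j (h j) := by
    intro h hh
    rw [Set.Finite.mem_toFinset] at hh
    set r : ℝ := ∏ j, max 1 ((γ j)⁻¹ * |(h j : ℝ)| ^ α) with hr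
    have hr1 : (1:ℝ) ≤ r := by
      rw [hr]
      refine le_trans (le_of_eq (by simp : (1:ℝ) = ∏ _j : Fin d, (1:ℝ))) ?_
      exact Finset.prod_le_prod (fun j _ => zero_le_one) (fun j _ => le_max_left _ _)
    have hrN : r ≤ N := hh
    have hprod : ∏ j, f j (h j) = r ^ (-q) := by
      rw [hr, ← Real.finset_prod_rpow _ _
        (fun j _ => le_trans zero_le_one (le_max_left _ _)) (-q)]
    rw [hprod]
    have h1 : r ^ q ≤ N ^ q := Real.rpow_le_rpow (by linarith) hrN hq0.le
    have h2 : r ^ q * r ^ (-q) = 1 := by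
      rw [← Real.rpow_add (by linarith)]
      simp
    have h3 : (0:ℝ) ≤ r ^ (-q) := Real.rpow_nonneg (by linarith) _
    nlinarith
  calc (hA.toFinset.card : ℝ) = ∑ _h ∈ hA.toFinset, (1:ℝ) := by simp
    _ ≤ ∑ h ∈ hA.toFinset, N ^ q * ∏ j, f j (h j) := Finset.sum_le_sum key
    _ = N ^ q * ∑ h ∈ hA.toFinset, ∏ j, f j (h j) := by rw [← Finset.mul_sum]
    _ ≤ N ^ q * ∑ h ∈ Fintype.piFinset T, ∏ j, f j (h j) := by
        refine mul_le_mul_of_nonneg_left ?_ (Real.rpow_nonneg hN0.le q)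
        refine Finset.sum_le_sum_of_subset_of_nonneg ?_
          (fun x _ _ => Finset.prod_nonneg fun j _ => hf0 j _)
        intro h hh
        rw [Fintype.mem_piFinset]
        intro j
        exact Finset.mem_image_of_mem _ hh
    _ = N ^ q * ∏ j, ∑ x ∈ T j, f j x := by rw [Finset.prod_univ_sum]
    _ ≤ N ^ q * ∏ j, (1 + 2 * realZeta (α * q) * γ j ^ q) := by
        refine mul_le_mul_of_nonneg_left ?_ (Real.rpow_nonneg hN0.le q)
        refine Finset.prod_le_prod (fun j _ => Finset.sum_nonneg fun x _ => hf0 j x) ?_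
        intro j _
        exact factor_bound hα (hγpos j) (hγ1 j) hq (T j)
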